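/- Let S be a set of n points in convex position such that t(S) is to the right of b(S), let m be the number of points of S strictly to the left of the line through b(S) and t(S), and let P = d_1,...,d_{n-1} be a {U,D,R}-labeled path with d_m = D and d_{m+1} ∈ {U,R}. If P_{1,m} has a planar direction-consistent embedding on S_ℓ ∪ {b(S)} mapping v_{m+1} to b(S), and P', the subpath on vertices v_{m+1},...,v_n, has a planar direction-consistent embedding on S_r ∪ {t(S), b(S)} mapping v_{m+1} to b(S), then the union of these two embeddings is a planar direction-consistent embedding of P on S. -/

import Mathlib

/-- Edge direction labels. -/
inductive Dir | U | D | L | R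
deriving DecidableEq

/-- Opposite label: U↔D, L↔R. -/
def Dir.opp : Dir → Dir
  | .U => .D | .D => .U | .L => .R | .R => .L

/-- Label after counterclockwise rotation by π/2: U↦L, D↦R, R↦U, L↦D. -/
def Dir.rot : Dir → Dir
  | .U => .L | .D => .R | .R => .U | .L => .D

/-- Label after vertical-line reflection: U↦U, D↦D, R↦L, L↦R. -/
def Dir.mir : Dir → Dir
  | .U => .U | .D => .D | .R => .L | .L => .R

/-- An edge from `a` to `b` is consistent with a direction label. -/
def dirOk : Dir → ℝ × ℝ → ℝ × ℝ → Prop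
  | .U, a, b => a.2 < b.2
  | .D, a, b => b.2 < a.2
  | .R, a, b => a.1 < b.1
  | .L, a, b => b.1 < a.1

/-- The drawing of a path with edge labels `d` and vertex placement `E` is
direction-consistent. -/
def DirConsistent {m : ℕ} (d : Fin m → Dir) (E : Fin (m + 1) → ℝ × ℝ) : Prop :=
  ∀ i : Fin m, dirOk (d i) (E i.castSucc) (E i.succ)

/-- The straight-line drawing of the path with vertex placement `E` is planar:
non-adjacent segments are disjoint; adjacent segments meet only at the shared endpoint. -/
def PlanarDrawing {m : ℕ} (E : Fin (m + 1) → ℝ × ℝ) : Prop :=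
  (∀ i j : Fin m, (i : ℕ) + 1 < (j : ℕ) →
    segment ℝ (E i.castSucc) (E i.succ) ∩ segment ℝ (E j.castSucc) (E j.succ) = ∅) ∧
  (∀ i j : Fin m, (i : ℕ) + 1 = (j : ℕ) →
    segment ℝ (E i.castSucc) (E i.succ) ∩ segment ℝ (E j.castSucc) (E j.succ) = {E i.succ})

/-- `E` is an embedding of the path vertices onto the point set `S`. -/
def EmbOn {m : ℕ} (E : Fin (m + 1) → ℝ × ℝ) (S : Set (ℝ × ℝ)) : Prop :=
  Function.Injective E ∧ Set.range E = S

/-- Planar direction-consistent embedding of the labeled path `d` on `S`. -/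
def PDCE {m : ℕ} (d : Fin m → Dir) (E : Fin (m + 1) → ℝ × ℝ) (S : Set (ℝ × ℝ)) : Prop :=
  EmbOn E S ∧ DirConsistent d E ∧ PlanarDrawing E

/-- `S` is in convex position. -/
def ConvexPos (S : Set (ℝ × ℝ)) : Prop :=
  ConvexIndependent ℝ ((↑) : S → ℝ × ℝ)

/-- No three distinct points of `S` are collinear. -/
def NoThreeCollinear (S : Set (ℝ × ℝ)) : Prop :=
  ∀ p ∈ S, ∀ q ∈ S, ∀ r ∈ S, p ≠ q → p ≠ r → q ≠ r →
    ¬ Collinear ℝ ({p, q, r} : Set (ℝ × ℝ))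

/-- General position: no three collinear, no two points with equal x- or y-coordinate. -/
def GenPos (S : Set (ℝ × ℝ)) : Prop :=
  NoThreeCollinear S ∧ ∀ p ∈ S, ∀ q ∈ S, p ≠ q → p.1 ≠ q.1 ∧ p.2 ≠ q.2

def IsTopmost (S : Set (ℝ × ℝ)) (t : ℝ × ℝ) : Prop :=
  t ∈ S ∧ ∀ p ∈ S, p ≠ t → p.2 < t.2
def IsBottommost (S : Set (ℝ × ℝ)) (b : ℝ × ℝ) : Prop :=
  b ∈ S ∧ ∀ p ∈ S, p ≠ b → b.2 < p.2
def IsLeftmost (S : Set (ℝ × ℝ)) (l : ℝ × ℝ) : Prop :=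
  l ∈ S ∧ ∀ p ∈ S, p ≠ l → l.1 < p.1
def IsRightmost (S : Set (ℝ × ℝ)) (r : ℝ × ℝ) : Prop :=
  r ∈ S ∧ ∀ p ∈ S, p ≠ r → p.1 < r.1

/-- Cross product telling on which side of the directed line `a → b` the point `p` lies
(`0 < cross a b p` means `p` is strictly to the left). -/
def cross (a b p : ℝ × ℝ) : ℝ :=
  (b.1 - a.1) * (p.2 - a.2) - (b.2 - a.2) * (p.1 - a.1)

/-- With `b` bottommost and `t` topmost, all other points lie strictly to the left of the
line through `b` and `t`. -/
def LeftSided (S : Set (ℝ × ℝ)) (b t : ℝ × ℝ) : Prop :=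
  IsBottommost S b ∧ IsTopmost S t ∧ ∀ p ∈ S, p ≠ b → p ≠ t → 0 < cross b t p

/-- With `b` bottommost and `t` topmost, all other points lie strictly to the right of the
line through `b` and `t`. -/
def RightSided (S : Set (ℝ × ℝ)) (b t : ℝ × ℝ) : Prop :=
  IsBottommost S b ∧ IsTopmost S t ∧ ∀ p ∈ S, p ≠ b → p ≠ t → cross b t p < 0

/-- Two points of `S` are consecutive on the convex hull of `S`: all other points of `S`
lie strictly on one side of the line through them. -/
def HullConsecutive (S : Set (ℝ × ℝ)) (p q : ℝ × ℝ) : Prop :=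
  p ∈ S ∧ q ∈ S ∧ p ≠ q ∧
    ((∀ r ∈ S, r ≠ p → r ≠ q → 0 < cross p q r) ∨
     (∀ r ∈ S, r ≠ p → r ≠ q → cross p q r < 0))

/-- Strip-convex point set with bottommost `b`, leftmost `l`, topmost `t`, rightmost `r`:
`b` and `l` coincide or are hull-consecutive, and so do `t` and `r`. -/
def StripConvex (S : Set (ℝ × ℝ)) (b l t r : ℝ × ℝ) : Prop :=
  IsBottommost S b ∧ IsLeftmost S l ∧ IsTopmost S t ∧ IsRightmost S r ∧
    (b = l ∨ HullConsecutive S b l) ∧ (t = r ∨ HullConsecutive S t r)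

/-- `T` is a consecutive subset of the convex point set `S` along its hull:
it can be separated from `S \ T` by a line. -/
def Consecutive (S T : Set (ℝ × ℝ)) : Prop :=
  T ⊆ S ∧ ∃ f : (ℝ × ℝ) →ₗ[ℝ] ℝ, ∃ c : ℝ,
    (∀ p ∈ T, c < f p) ∧ ∀ p ∈ S \ T, f p < c

lemma cross_affine (b t x y : ℝ × ℝ) {p : ℝ × ℝ} (hp : p ∈ segment ℝ x y) :
    ∃ a c : ℝ, 0 ≤ a ∧ 0 ≤ c ∧ a + c = 1 ∧
      cross b t p = a * cross b t x + c * cross b t y := by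
  obtain ⟨a, c, ha, hc, hac, rfl⟩ := hp
  refine ⟨a, c, ha, hc, hac, ?_⟩
  have hc1 : c = 1 - a := by linarith
  subst hc1
  simp [cross, Prod.fst_add, Prod.snd_add, Prod.smul_fst, Prod.smul_snd, smul_eq_mul]
  ring

lemma seg_nonpos {b t x y p : ℝ × ℝ} (hp : p ∈ segment ℝ x y)
    (hx : cross b t x ≤ 0) (hy : cross b t y ≤ 0) : cross b t p ≤ 0 := by
  obtain ⟨a, c, ha, hc, hac, h⟩ := cross_affine b t x y hp
  nlinarith

lemma seg_pos {b t x y p : ℝ × ℝ} (hp : p ∈ segment ℝ x y)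
    (hx : 0 < cross b t x) (hy : 0 < cross b t y) : 0 < cross b t p := by
  obtain ⟨a, c, ha, hc, hac, h⟩ := cross_affine b t x y hp
  rcases eq_or_lt_of_le ha with h0 | h0
  · have : c = 1 := by linarith
    nlinarith
  · nlinarith

lemma seg_neg {b t x y p : ℝ × ℝ} (hp : p ∈ segment ℝ x y)
    (hx : cross b t x < 0) (hy : cross b t y < 0) : cross b t p < 0 := by
  obtain ⟨a, c, ha, hc, hac, h⟩ := cross_affine b t x y hp
  rcases eq_or_lt_of_le ha with h0 | h0
  · have : c = 1 := by linarith
    nlinarith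
  · nlinarith

lemma cross_comb (b t x y : ℝ × ℝ) {a c : ℝ} (hac : a + c = 1) :
    cross b t (a • x + c • y) = a * cross b t x + c * cross b t y := by
  have hc1 : c = 1 - a := by linarith
  subst hc1
  simp [cross, Prod.fst_add, Prod.snd_add, Prod.smul_fst, Prod.smul_snd, smul_eq_mul]
  ring

lemma seg_endpoint {b t x y p : ℝ × ℝ} (hp : p ∈ segment ℝ x y)
    (hx : 0 ≤ cross b t x) (hy : 0 < cross b t y) (hpz : cross b t p ≤ 0) : p = x := by
  obtain ⟨a, c, ha, hc, hac, rfl⟩ := hp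
  rw [cross_comb b t x y hac] at hpz
  have hc0 : c = 0 := by nlinarith
  have ha1 : a = 1 := by linarith
  simp [hc0, ha1]

lemma seg_endpoint' {b t x y p : ℝ × ℝ} (hp : p ∈ segment ℝ x y)
    (hx : cross b t x ≤ 0) (hy : cross b t y < 0) (hpz : 0 ≤ cross b t p) : p = x := by
  obtain ⟨a, c, ha, hc, hac, rfl⟩ := hp
  rw [cross_comb b t x y hac] at hpz
  have hc0 : c = 0 := by nlinarith
  have ha1 : a = 1 := by linarith
  simp [hc0, ha1]

lemma cross_self_left (b t : ℝ × ℝ) : cross b t b = 0 := by simp [cross]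

lemma cross_self_right (b t : ℝ × ℝ) : cross b t t = 0 := by unfold cross; ring

/-- L1: a point of nonpositive cross on a "left" segment must be `b`, which is an endpoint. -/
lemma left_seg_hit {b t x y p : ℝ × ℝ} (hp : p ∈ segment ℝ x y)
    (hx : x = b ∨ 0 < cross b t x) (hy : y = b ∨ 0 < cross b t y)
    (hpz : cross b t p ≤ 0) : p = b ∧ (x = b ∨ y = b) := by
  rcases hx with hxb | hx
  · rcases hy with hyb | hy
    · rw [hxb, hyb] at hp; simp at hp; exact ⟨hp, Or.inl hxb⟩
    · have hx0 : (0:ℝ) ≤ cross b t x := by rw [hxb, cross_self_left]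
      exact ⟨(seg_endpoint hp hx0 hy hpz).trans hxb, Or.inl hxb⟩
  · rcases hy with hyb | hy
    · have hy0 : (0:ℝ) ≤ cross b t y := by rw [hyb, cross_self_left]
      exact ⟨(seg_endpoint (segment_symm ℝ x y ▸ hp) hy0 hx hpz).trans hyb, Or.inr hyb⟩
    · exact absurd hpz (not_le.mpr (seg_pos hp hx hy))

/-- R1: if `b` lies on a "right" segment, it is an endpoint. -/
lemma right_seg_hit {b t z w : ℝ × ℝ} (hb : b ∈ segment ℝ z w)
    (hz : z = b ∨ z = t ∨ cross b t z < 0) (hw : w = b ∨ w = t ∨ cross b t w < 0)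
    (hbt : b ≠ t) : z = b ∨ w = b := by
  have hcb : cross b t b = 0 := cross_self_left b t
  have hct : cross b t t = 0 := cross_self_right b t
  rcases hz with hzb | hzt | hz
  · exact Or.inl hzb
  · rcases hw with hwb | hwt | hw
    · exact Or.inr hwb
    · rw [hzt, hwt] at hb; simp at hb; exact absurd hb hbt
    · have hz0 : cross b t z ≤ 0 := by rw [hzt, cross_self_right]
      exact absurd ((seg_endpoint' hb hz0 hw (le_of_eq hcb.symm)).trans hzt) hbt
  · rcases hw with hwb | hwt | hw
    · exact Or.inr hwb
    · have hw0 : cross b t w ≤ 0 := by rw [hwt, cross_self_right]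
      exact absurd ((seg_endpoint' (segment_symm ℝ z w ▸ hb) hw0 hz
        (le_of_eq hcb.symm)).trans hwt) hbt
    · exact absurd (le_of_eq hcb.symm) (not_le.mpr (seg_neg hb hz hw))

lemma cross_zero_collinear {b t p : ℝ × ℝ} (h : cross b t p = 0) (hne : b.1 ≠ t.1) :
    Collinear ℝ ({b, t, p} : Set (ℝ × ℝ)) := by
  rw [collinear_iff_of_mem (Set.mem_insert b {t, p})]
  refine ⟨t - b, ?_⟩
  intro q hq
  have h1 : t.1 - b.1 ≠ 0 := sub_ne_zero.mpr (Ne.symm hne)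
  rcases hq with hq | hq | hq
  · exact ⟨0, by rw [hq]; simp⟩
  · exact ⟨1, by rw [hq]; simp⟩
  · refine ⟨(p.1 - b.1) / (t.1 - b.1), ?_⟩
    have h2 : (t.1 - b.1) * (p.2 - b.2) = (t.2 - b.2) * (p.1 - b.1) := by
      unfold cross at h; linarith
    rw [hq]
    apply Prod.ext
    · simp [Prod.smul_fst]
      field_simp
      ring
    · simp [Prod.smul_snd]
      field_simp
      nlinarith [h2]


lemma glue_aux {m s : ℕ}
    (d : Fin (m + s) → Dir)
    (S : Set (ℝ × ℝ)) (hgen : GenPos S)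
    (b t : ℝ × ℝ) (hbS : b ∈ S) (htS : t ∈ S) (hbt : b.1 < t.1)
    (E1 : Fin (m + 1) → ℝ × ℝ)
    (h1 : PDCE (fun i : Fin m => d (Fin.castLE (Nat.le_add_right m s) i)) E1
      ({p ∈ S | 0 < cross b t p} ∪ {b}))
    (hE1 : E1 (Fin.last m) = b)
    (E2 : Fin (s + 1) → ℝ × ℝ)
    (h2 : PDCE (fun i : Fin s => d ⟨m + (i : ℕ), by omega⟩) E2
      ({p ∈ S | cross b t p < 0} ∪ {t, b}))
    (hE2 : E2 0 = b)
    (F : Fin (m + s + 1) → ℝ × ℝ)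
    (hF1 : ∀ j : Fin (m + s + 1), ∀ hj : (j : ℕ) ≤ m, F j = E1 ⟨(j : ℕ), by omega⟩)
    (hF2 : ∀ j : Fin (m + s + 1), ∀ hj : m < (j : ℕ), F j = E2 ⟨(j : ℕ) - m, by omega⟩) :
    PDCE d F S := by
  obtain ⟨⟨hE1inj, hE1rng⟩, hE1dir, hE1pl⟩ := h1
  obtain ⟨⟨hE2inj, hE2rng⟩, hE2dir, hE2pl⟩ := h2
  have hbtne : b ≠ t := fun h => absurd (congrArg Prod.fst h) (ne_of_lt hbt)
  have mem1 : ∀ k, E1 k ∈ ({p ∈ S | 0 < cross b t p} ∪ {b}) := fun k =>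
    hE1rng ▸ Set.mem_range_self k
  have mem2 : ∀ k, E2 k ∈ ({p ∈ S | cross b t p < 0} ∪ {t, b}) := fun k =>
    hE2rng ▸ Set.mem_range_self k
  have memS1 : ∀ k, E1 k ∈ S := by
    intro k
    rcases (Set.mem_union _ _ _).1 (mem1 k) with h | h
    · exact h.1
    · rw [Set.mem_singleton_iff.1 h]; exact hbS
  have memS2 : ∀ k, E2 k ∈ S := by
    intro k
    rcases (Set.mem_union _ _ _).1 (mem2 k) with h | h
    · exact h.1
    · rcases Set.mem_insert_iff.1 h with h | h
      · rw [h]; exact htS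
      · rw [Set.mem_singleton_iff.1 h]; exact hbS
  have c1 : ∀ k, E1 k = b ∨ 0 < cross b t (E1 k) := by
    intro k
    rcases (Set.mem_union _ _ _).1 (mem1 k) with h | h
    · exact Or.inr h.2
    · exact Or.inl (Set.mem_singleton_iff.1 h)
  have c2 : ∀ k, E2 k = b ∨ E2 k = t ∨ cross b t (E2 k) < 0 := by
    intro k
    rcases (Set.mem_union _ _ _).1 (mem2 k) with h | h
    · exact Or.inr (Or.inr h.2)
    · rcases Set.mem_insert_iff.1 h with h | h
      · exact Or.inr (Or.inl h)
      · exact Or.inl (Set.mem_singleton_iff.1 h)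
  have c2' : ∀ k, cross b t (E2 k) ≤ 0 := by
    intro k
    rcases c2 k with h | h | h
    · rw [h, cross_self_left]
    · rw [h, cross_self_right]
    · exact le_of_lt h
  have hb1 : ∀ k : Fin (m + 1), E1 k = b → (k : ℕ) = m := by
    intro k h
    have := hE1inj (h.trans hE1.symm)
    rw [this]; rfl
  have hb2 : ∀ k : Fin (s + 1), E2 k = b → (k : ℕ) = 0 := by
    intro k h
    have := hE2inj (h.trans hE2.symm)
    rw [this]; rfl
  -- evaluation of F on edge endpoints
  have edge1 : ∀ i : Fin (m + s), ∀ hi : (i : ℕ) < m,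
      F i.castSucc = E1 ⟨(i : ℕ), by omega⟩ ∧ F i.succ = E1 ⟨(i : ℕ) + 1, by omega⟩ := by
    intro i hi
    constructor
    · rw [hF1 i.castSucc (by simp; omega)]
      exact congrArg E1 (Fin.ext (by simp))
    · rw [hF1 i.succ (by simp; omega)]
      exact congrArg E1 (Fin.ext (by simp))
  have hFm : ∀ j : Fin (m + s + 1), (j : ℕ) = m → F j = b := by
    intro j hj
    rw [hF1 j (le_of_eq hj), ← hE1]
    exact congrArg E1 (Fin.ext (by simp [hj, Fin.last]))
  have edge2 : ∀ i : Fin (m + s), ∀ hi : m ≤ (i : ℕ),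
      F i.castSucc = E2 ⟨(i : ℕ) - m, by omega⟩ ∧
      F i.succ = E2 ⟨(i : ℕ) - m + 1, by omega⟩ := by
    intro i hi
    constructor
    · rcases eq_or_lt_of_le hi with h | h
      · rw [hFm i.castSucc (by simp; omega), ← hE2]
        exact congrArg E2 (Fin.ext (by simp; omega))
      · rw [hF2 i.castSucc (by simp; omega)]
        exact congrArg E2 (Fin.ext (by simp))
    · rw [hF2 i.succ (by simp; omega)]
      exact congrArg E2 (Fin.ext (by simp; omega))
  refine ⟨⟨?_, ?_⟩, ?_, ?_, ?_⟩
  · -- injectivity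
    intro j1 j2 hj
    rcases le_or_gt (j1 : ℕ) m with h1' | h1' <;> rcases le_or_gt (j2 : ℕ) m with h2' | h2'
    · rw [hF1 j1 h1', hF1 j2 h2'] at hj
      have := congrArg Fin.val (hE1inj hj)
      exact Fin.ext this
    · rw [hF1 j1 h1', hF2 j2 h2'] at hj
      exfalso
      have hne : (⟨(j2 : ℕ) - m, by omega⟩ : Fin (s + 1)) ≠ (0 : Fin (s + 1)) := by
        intro h; have := congrArg Fin.val h; simp at this; omega
      have hnb : E2 ⟨(j2 : ℕ) - m, by omega⟩ ≠ b := by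
        intro h; exact absurd (hb2 _ h) (by simp; omega)
      rcases c1 ⟨(j1 : ℕ), by omega⟩ with h | h
      · exact hnb (hj ▸ h)
      · rw [hj] at h
        exact absurd h (not_lt.mpr (c2' _))
    · rw [hF2 j1 h1', hF1 j2 h2'] at hj
      exfalso
      have hnb : E2 ⟨(j1 : ℕ) - m, by omega⟩ ≠ b := by
        intro h; exact absurd (hb2 _ h) (by simp; omega)
      rcases c1 ⟨(j2 : ℕ), by omega⟩ with h | h
      · exact hnb (hj.symm ▸ h)
      · rw [← hj] at h
        exact absurd h (not_lt.mpr (c2' _))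
    · rw [hF2 j1 h1', hF2 j2 h2'] at hj
      have := congrArg Fin.val (hE2inj hj)
      simp at this
      exact Fin.ext (by omega)
  · -- range
    apply Set.eq_of_subset_of_subset
    · rintro p ⟨j, rfl⟩
      rcases le_or_gt (j : ℕ) m with h | h
      · rw [hF1 j h]; exact memS1 _
      · rw [hF2 j h]; exact memS2 _
    · intro p hp
      by_cases hpb : p = b
      · exact ⟨⟨m, by omega⟩, by rw [hFm ⟨m, by omega⟩ rfl, hpb]⟩
      have hr : p ∈ Set.range E2 → p ∈ Set.range F := by
        rintro ⟨k, rfl⟩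
        refine ⟨⟨m + (k : ℕ), by omega⟩, ?_⟩
        rcases Nat.eq_zero_or_pos (k : ℕ) with hk | hk
        · rw [hFm ⟨m + (k : ℕ), by omega⟩ (by simp [hk]), ← hE2]
          exact (congrArg E2 (Fin.ext (by simp [hk]))).symm
        · rw [hF2 ⟨m + (k : ℕ), by omega⟩ (by show m < m + (k : ℕ); omega)]
          exact congrArg E2 (Fin.ext (by simp)) |>.symm
      by_cases hpt : p = t
      · exact hr (hE2rng.symm ▸ Set.mem_union_right _ (by simp [hpt]))
      rcases lt_trichotomy (cross b t p) 0 with hc | hc | hc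
      · exact hr (hE2rng.symm ▸ Set.mem_union_left _ ⟨hp, hc⟩)
      · exfalso
        have := hgen.1 b hbS t htS p hp hbtne (Ne.symm hpb) (Ne.symm hpt)
        exact this (cross_zero_collinear hc (ne_of_lt hbt))
      · have : p ∈ Set.range E1 := hE1rng.symm ▸ Set.mem_union_left _ ⟨hp, hc⟩
        obtain ⟨k, rfl⟩ := this
        exact ⟨⟨(k : ℕ), by omega⟩, by rw [hF1 ⟨(k : ℕ), by omega⟩ (by simp; omega)]⟩
  · -- direction consistency
    intro i
    rcases lt_or_ge (i : ℕ) m with hi | hi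
    · obtain ⟨e1, e2⟩ := edge1 i hi
      rw [e1, e2]
      have h := hE1dir ⟨(i : ℕ), hi⟩
      dsimp only at h
      have hd' : d (Fin.castLE (Nat.le_add_right m s) ⟨(i : ℕ), hi⟩) = d i :=
        congrArg d (Fin.ext rfl)
      rw [hd'] at h
      exact h
    · obtain ⟨e1, e2⟩ := edge2 i hi
      rw [e1, e2]
      have h := hE2dir ⟨(i : ℕ) - m, by omega⟩
      dsimp only at h
      have hd' : d ⟨m + ((i : ℕ) - m), by omega⟩ = d i := congrArg d (Fin.ext (by simp; omega))
      rw [hd'] at h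
      exact h
  · -- planarity: disjointness
    intro i j hij
    rcases lt_or_ge (j : ℕ) m with hjm | hjm
    · have him : (i : ℕ) < m := by omega
      obtain ⟨ei1, ei2⟩ := edge1 i him
      obtain ⟨ej1, ej2⟩ := edge1 j hjm
      rw [ei1, ei2, ej1, ej2]
      exact hE1pl.1 ⟨(i : ℕ), him⟩ ⟨(j : ℕ), hjm⟩ hij
    rcases lt_or_ge (i : ℕ) m with him | him
    · -- mixed
      obtain ⟨ei1, ei2⟩ := edge1 i him
      obtain ⟨ej1, ej2⟩ := edge2 j hjm
      rw [ei1, ei2, ej1, ej2]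
      rw [Set.eq_empty_iff_forall_notMem]
      rintro u ⟨hu1, hu2⟩
      obtain ⟨hub, hend⟩ := left_seg_hit hu1 (c1 _) (c1 _) (seg_nonpos hu2 (c2' _) (c2' _))
      have him1 : (i : ℕ) + 1 = m := by
        rcases hend with h | h
        · have h' : (i : ℕ) = m := hb1 _ h; omega
        · exact hb1 _ h
      rcases right_seg_hit (hub ▸ hu2) (c2 _) (c2 _) hbtne with h | h
      · have h' : (j : ℕ) - m = 0 := hb2 _ h; omega
      · have h' : (j : ℕ) - m + 1 = 0 := hb2 _ h; omega
    · -- both right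
      obtain ⟨ei1, ei2⟩ := edge2 i him
      obtain ⟨ej1, ej2⟩ := edge2 j hjm
      rw [ei1, ei2, ej1, ej2]
      have h := hE2pl.1 ⟨(i : ℕ) - m, by omega⟩ ⟨(j : ℕ) - m, by omega⟩ (by simp; omega)
      have e3 : E2 (⟨(i : ℕ) - m, by omega⟩ : Fin s).succ = E2 ⟨(i : ℕ) - m + 1, by omega⟩ :=
        congrArg E2 (Fin.ext (by simp))
      have e4 : E2 (⟨(j : ℕ) - m, by omega⟩ : Fin s).succ = E2 ⟨(j : ℕ) - m + 1, by omega⟩ :=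
        congrArg E2 (Fin.ext (by simp))
      rw [e3, e4] at h
      exact h
  · -- planarity: adjacent edges
    intro i j hij
    rcases lt_or_ge (j : ℕ) m with hjm | hjm
    · have him : (i : ℕ) < m := by omega
      obtain ⟨ei1, ei2⟩ := edge1 i him
      obtain ⟨ej1, ej2⟩ := edge1 j hjm
      rw [ei1, ei2, ej1, ej2]
      exact hE1pl.2 ⟨(i : ℕ), him⟩ ⟨(j : ℕ), hjm⟩ hij
    rcases lt_or_ge (i : ℕ) m with him | him
    · -- mixed adjacent : i+1 = j = m
      have hjm' : (j : ℕ) = m := by omega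
      obtain ⟨ei1, ei2⟩ := edge1 i him
      obtain ⟨ej1, ej2⟩ := edge2 j hjm
      rw [ei1, ei2, ej1, ej2]
      have hFs : E1 ⟨(i : ℕ) + 1, by omega⟩ = b := by
        rw [← hE1]; exact congrArg E1 (Fin.ext (by simp [Fin.last]; omega))
      have hE20 : E2 ⟨(j : ℕ) - m, by omega⟩ = b := by
        rw [← hE2]; exact congrArg E2 (Fin.ext (by simp; omega))
      rw [hFs, hE20]
      ext u
      simp only [Set.mem_inter_iff, Set.mem_singleton_iff]
      constructor
      · rintro ⟨hu1, hu2⟩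
        exact (left_seg_hit hu1 (c1 _) (Or.inl rfl)
          (seg_nonpos hu2 (le_of_eq (cross_self_left b t)) (c2' _))).1
      · rintro rfl
        exact ⟨right_mem_segment ℝ _ _, left_mem_segment ℝ _ _⟩
    · -- both right
      obtain ⟨ei1, ei2⟩ := edge2 i him
      obtain ⟨ej1, ej2⟩ := edge2 j hjm
      rw [ei1, ei2, ej1, ej2]
      have h := hE2pl.2 ⟨(i : ℕ) - m, by omega⟩ ⟨(j : ℕ) - m, by omega⟩ (by simp; omega)
      have e3 : E2 (⟨(i : ℕ) - m, by omega⟩ : Fin s).succ = E2 ⟨(i : ℕ) - m + 1, by omega⟩ :=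
        congrArg E2 (Fin.ext (by simp))
      have e4 : E2 (⟨(j : ℕ) - m, by omega⟩ : Fin s).succ = E2 ⟨(j : ℕ) - m + 1, by omega⟩ :=
        congrArg E2 (Fin.ext (by simp))
      rw [e3, e4] at h
      exact h

/-- Case 1 gluing: with `m = |S_ℓ|`, `d_m = D`, `d_{m+1} ∈ {U,R}`, gluing a
PDCE of the first `m` edges on `S_ℓ ∪ {b(S)}` ending at `b(S)` with a PDCE of the
remaining edges on `S_r ∪ {t(S), b(S)}` starting at `b(S)` gives a PDCE of `P` on `S`. -/
theorem glue_pdce_case1 {m s : ℕ} (hm : 0 < m) (hs : 0 < s)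
    (d : Fin (m + s) → Dir) (hd : ∀ i, d i ≠ Dir.L)
    (S : Set (ℝ × ℝ)) (hfin : S.Finite) (hcard : S.ncard = m + s + 1)
    (hconv : ConvexPos S) (hgen : GenPos S)
    (b t : ℝ × ℝ) (hb : IsBottommost S b) (ht : IsTopmost S t) (hbt : b.1 < t.1)
    (hSl : ({p ∈ S | 0 < cross b t p}).ncard = m)
    (hdm : d ⟨m - 1, by omega⟩ = Dir.D)
    (hdm1 : d ⟨m, by omega⟩ = Dir.U ∨ d ⟨m, by omega⟩ = Dir.R)
    (E1 : Fin (m + 1) → ℝ × ℝ)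
    (h1 : PDCE (fun i : Fin m => d (Fin.castLE (Nat.le_add_right m s) i)) E1
      ({p ∈ S | 0 < cross b t p} ∪ {b}))
    (hE1 : E1 (Fin.last m) = b)
    (E2 : Fin (s + 1) → ℝ × ℝ)
    (h2 : PDCE (fun i : Fin s => d ⟨m + (i : ℕ), by omega⟩) E2
      ({p ∈ S | cross b t p < 0} ∪ {t, b}))
    (hE2 : E2 0 = b) :
    PDCE d
      (fun j : Fin (m + s + 1) =>
        if h : (j : ℕ) ≤ m then E1 ⟨(j : ℕ), by omega⟩
        else E2 ⟨(j : ℕ) - m, by have := j.isLt; omega⟩)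
      S := by
  apply glue_aux d S hgen b t hb.1 ht.1 hbt E1 h1 hE1 E2 h2 hE2
  · intro j hj
    simp only [dif_pos hj]
  · intro j hj
    simp only [dif_neg (not_le.mpr hj)]
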